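/- Let H_c : [0,T] → M(d,ℂ) be continuous and let V_c be the time-ordered exponential solving V_c'(t) = i H_c(t) V_c(t), V_c(0) = 1. Suppose Q ∈ M(d,ℂ) is self-adjoint, Q ≠ 0, and ∫₀ᵀ V_c(s)* Q V_c(s) ds = 0. Then max_{0 ≤ t ≤ T} ‖H_c(t)‖ ≥ ln(2)/(2T). -/

import Mathlib

open scoped Matrix.Norms.L2Operator
open Matrix Set Real
set_option maxHeartbeats 1000000

theorem stmt5 {d : ℕ} {T : ℝ} (hT : 0 < T)
    (Hc : ℝ → Matrix (Fin d) (Fin d) ℂ)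
    (hHc : ContinuousOn Hc (Set.Icc 0 T))
    (Vc : ℝ → Matrix (Fin d) (Fin d) ℂ) (hVc0 : Vc 0 = 1)
    (hVc : ∀ t ∈ Set.Icc (0:ℝ) T, HasDerivAt Vc (Complex.I • (Hc t * Vc t)) t)
    (Q : Matrix (Fin d) (Fin d) ℂ) (hQ : Qᴴ = Q) (hQne : Q ≠ 0)
    (hint : ∫ s in (0:ℝ)..T, (Vc s)ᴴ * Q * Vc s = 0) :
    ∃ t ∈ Set.Icc (0:ℝ) T, Real.log 2 / (2 * T) ≤ ‖Hc t‖ := by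
  by_contra hcon
  push_neg at hcon
  -- d = 0 case
  rcases Nat.eq_zero_or_pos d with hd | hd
  · subst hd
    exact hQne (Subsingleton.elim Q 0)
  haveI : Nonempty (Fin d) := ⟨⟨0, hd⟩⟩
  set c : ℝ := Real.log 2 / (2 * T) with hc_def
  have hlog2 : (0:ℝ) < Real.log 2 := Real.log_pos (by norm_num)
  have hc : 0 < c := div_pos hlog2 (by linarith)
  -- max of ‖Hc‖
  obtain ⟨t₀, ht₀, hmax⟩ := isCompact_Icc.exists_isMaxOn (Set.nonempty_Icc.2 hT.le) hHc.norm
  set c' : ℝ := ‖Hc t₀‖ with hc'_def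
  have hc'c : c' < c := hcon t₀ ht₀
  have hc'0 : 0 ≤ c' := norm_nonneg _
  have hnorm1 : ‖(1 : Matrix (Fin d) (Fin d) ℂ)‖ = 1 := by
    rw [Matrix.cstar_norm_def, _root_.map_one]; exact norm_one
  -- continuity of Vc
  have hVcont : ContinuousOn Vc (Set.Icc 0 T) := fun t ht =>
    (hVc t ht).continuousAt.continuousWithinAt
  -- Gronwall
  have key : ∀ t ∈ Set.Icc (0:ℝ) T, ‖Vc t - 1‖ ≤ gronwallBound 0 c' c' (t - 0) := by
    apply norm_le_gronwallBound_of_norm_deriv_right_le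
      (f' := fun t => Complex.I • (Hc t * Vc t))
    · exact hVcont.sub continuousOn_const
    · intro t ht
      exact ((hVc t (Set.Ico_subset_Icc_self ht)).sub_const 1).hasDerivWithinAt
    · rw [hVc0]; simp
    · intro t ht
      have htI := Set.Ico_subset_Icc_self ht
      have h1 : ‖Complex.I • (Hc t * Vc t)‖ = ‖Hc t * Vc t‖ := by
        rw [norm_smul, Complex.norm_I, one_mul]
      rw [h1]
      calc ‖Hc t * Vc t‖ ≤ ‖Hc t‖ * ‖Vc t‖ := Matrix.l2_opNorm_mul _ _
        _ ≤ c' * ‖Vc t‖ := by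
            apply mul_le_mul_of_nonneg_right (hmax htI) (norm_nonneg _)
        _ ≤ c' * (‖Vc t - 1‖ + 1) := by
            apply mul_le_mul_of_nonneg_left _ hc'0
            calc ‖Vc t‖ = ‖(Vc t - 1) + 1‖ := by rw [sub_add_cancel]
              _ ≤ ‖Vc t - 1‖ + ‖(1 : Matrix (Fin d) (Fin d) ℂ)‖ := norm_add_le _ _
              _ = ‖Vc t - 1‖ + 1 := by rw [hnorm1]
        _ = c' * ‖Vc t - 1‖ + c' := by ring
  have keyexp : ∀ t ∈ Set.Icc (0:ℝ) T, ‖Vc t - 1‖ ≤ Real.exp (c' * t) - 1 := by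
    intro t ht
    refine (key t ht).trans ?_
    rcases eq_or_lt_of_le hc'0 with h0 | h0
    · rw [← h0, gronwallBound_K0]
      simp [Real.exp_nonneg, Real.one_le_exp_iff]
    · rw [gronwallBound_of_K_ne_0 h0.ne']
      rw [sub_zero]
      rw [div_self h0.ne']
      simp
  have hVle : ∀ t ∈ Set.Icc (0:ℝ) T, ‖Vc t‖ ≤ Real.exp (c' * t) := by
    intro t ht
    have h2 := keyexp t ht
    have h3 : ‖Vc t‖ ≤ ‖Vc t - 1‖ + 1 := by
      calc ‖Vc t‖ = ‖(Vc t - 1) + 1‖ := by rw [sub_add_cancel]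
        _ ≤ ‖Vc t - 1‖ + ‖(1 : Matrix (Fin d) (Fin d) ℂ)‖ := norm_add_le _ _
        _ = ‖Vc t - 1‖ + 1 := by rw [hnorm1]
    linarith
  have hQpos : (0:ℝ) < ‖Q‖ := norm_pos_iff.mpr hQne
  set C : ℝ := ‖Q‖ * (Real.exp (2 * c' * T) - 1) with hC
  have hbound : ∀ s ∈ Set.Icc (0:ℝ) T, ‖Q - (Vc s)ᴴ * Q * Vc s‖ ≤ C := by
    intro s hs
    rw [norm_sub_rev]
    have hid : (Vc s)ᴴ * Q * Vc s - Q = (Vc s - 1)ᴴ * Q * Vc s + Q * (Vc s - 1) := by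
      rw [Matrix.conjTranspose_sub, Matrix.conjTranspose_one]
      noncomm_ring
    rw [hid]
    have e1 : ‖Vc s - 1‖ ≤ Real.exp (c' * s) - 1 := keyexp s hs
    have e2 : ‖Vc s‖ ≤ Real.exp (c' * s) := hVle s hs
    have e3 : ‖(Vc s - 1)ᴴ * Q * Vc s‖ ≤ ‖Vc s - 1‖ * ‖Q‖ * ‖Vc s‖ := by
      calc ‖(Vc s - 1)ᴴ * Q * Vc s‖ ≤ ‖(Vc s - 1)ᴴ * Q‖ * ‖Vc s‖ := Matrix.l2_opNorm_mul _ _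
        _ ≤ ‖(Vc s - 1)ᴴ‖ * ‖Q‖ * ‖Vc s‖ :=
            mul_le_mul_of_nonneg_right (Matrix.l2_opNorm_mul _ _) (norm_nonneg _)
        _ = ‖Vc s - 1‖ * ‖Q‖ * ‖Vc s‖ := by rw [Matrix.l2_opNorm_conjTranspose]
    have e4 : ‖Q * (Vc s - 1)‖ ≤ ‖Q‖ * ‖Vc s - 1‖ := Matrix.l2_opNorm_mul _ _
    have e5 : Real.exp (2 * c' * s) = Real.exp (c' * s) * Real.exp (c' * s) := by
      rw [← Real.exp_add]; ring_nf
    have e6 : Real.exp (2 * c' * s) ≤ Real.exp (2 * c' * T) := by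
      apply Real.exp_le_exp.2
      nlinarith [hs.1, hs.2]
    have e7 : (1:ℝ) ≤ Real.exp (c' * s) := by
      rw [Real.one_le_exp_iff]
      exact mul_nonneg hc'0 hs.1
    calc ‖(Vc s - 1)ᴴ * Q * Vc s + Q * (Vc s - 1)‖
        ≤ ‖(Vc s - 1)ᴴ * Q * Vc s‖ + ‖Q * (Vc s - 1)‖ := norm_add_le _ _
      _ ≤ C := by
          rw [hC]
          have p1 : ‖Vc s - 1‖ * ‖Q‖ * ‖Vc s‖ ≤
              (Real.exp (c' * s) - 1) * ‖Q‖ * Real.exp (c' * s) := by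
            have h1 : 0 ≤ ‖Vc s - 1‖ * ‖Q‖ := mul_nonneg (norm_nonneg _) (norm_nonneg _)
            have h2 : ‖Vc s - 1‖ * ‖Q‖ ≤ (Real.exp (c' * s) - 1) * ‖Q‖ :=
              mul_le_mul_of_nonneg_right e1 hQpos.le
            exact mul_le_mul h2 e2 (norm_nonneg _) (by nlinarith)
          have p2 : ‖Q‖ * ‖Vc s - 1‖ ≤ ‖Q‖ * (Real.exp (c' * s) - 1) :=
            mul_le_mul_of_nonneg_left e1 hQpos.le
          have p3 : ‖Q‖ * (Real.exp (2 * c' * s) - 1) ≤ ‖Q‖ * (Real.exp (2 * c' * T) - 1) := by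
            apply mul_le_mul_of_nonneg_left _ hQpos.le
            linarith
          nlinarith [e3, e4]
  have hCQ : C < ‖Q‖ := by
    have h2cT : 2 * c * T = Real.log 2 := by
      rw [hc_def]; field_simp
    have hexp : Real.exp (2 * c' * T) < 2 := by
      calc Real.exp (2 * c' * T) < Real.exp (Real.log 2) := by
            apply Real.exp_lt_exp.2
            nlinarith
        _ = 2 := Real.exp_log (by norm_num)
    rw [hC]
    nlinarith
  have hconjcont : Continuous (fun A : Matrix (Fin d) (Fin d) ℂ => Aᴴ) := by
    have : Isometry (fun A : Matrix (Fin d) (Fin d) ℂ => Aᴴ) := by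
      apply Isometry.of_dist_eq
      intro a b
      rw [dist_eq_norm, dist_eq_norm, ← Matrix.conjTranspose_sub, Matrix.l2_opNorm_conjTranspose]
    exact this.continuous
  have hg : IntervalIntegrable (fun s => (Vc s)ᴴ * Q * Vc s) MeasureTheory.volume 0 T := by
    apply ContinuousOn.intervalIntegrable
    rw [Set.uIcc_of_le hT.le]
    exact ((hconjcont.comp_continuousOn hVcont).mul continuousOn_const).mul hVcont
  have hTQ : (T:ℝ) • Q = ∫ s in (0:ℝ)..T, (Q - (Vc s)ᴴ * Q * Vc s) := by
    rw [intervalIntegral.integral_sub intervalIntegrable_const hg, hint, sub_zero,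
      intervalIntegral.integral_const]
    rw [sub_zero]
  have hnormle : ‖(T:ℝ) • Q‖ ≤ C * |T - 0| := by
    rw [hTQ]
    apply intervalIntegral.norm_integral_le_of_norm_le_const
    intro s hs
    rw [Set.uIoc_of_le hT.le] at hs
    exact hbound s (Set.Ioc_subset_Icc_self hs)
  rw [norm_smul, Real.norm_of_nonneg hT.le] at hnormle
  rw [sub_zero, abs_of_nonneg hT.le] at hnormle
  nlinarith
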